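/- For every 2-user broadcast channel N on finite alphabets and every fully NS-assisted (tripartite) coding scheme Z with message sets {1,...,M1}, {1,...,M2}, the induced joint distribution p(w2,x,y1) = (1/(M1·M2)) Σ_{w1,y2} Z_T(x|w1,w2) N(y1,y2|x) satisfies I(X;Y1|W2) ≥ η₁(Z)·log₂ M1 − H_b(η₁(Z)), where Z_T(x|w1,w2) = Σ_{ŵ1,ŵ2} Z(x,ŵ1,ŵ2|(w1,w2),y1,y2) is the transmitter marginal (independent of (y1,y2) by the non-signaling property). -/

import Mathlib

open scoped BigOperators Classical
open Finset Filter

noncomputable section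

/-- A probability mass function on a finite alphabet. -/
def IsPMF {A : Type*} [Fintype A] (p : A → ℝ) : Prop :=
  (∀ a, 0 ≤ p a) ∧ ∑ a, p a = 1

/-- A stochastic kernel. -/
def IsKernel {A B : Type*} [Fintype B] (D : A → B → ℝ) : Prop :=
  (∀ a b, 0 ≤ D a b) ∧ ∀ a, ∑ b, D a b = 1

/-- A 2-user broadcast channel kernel `N(y1,y2|x)`. -/
def IsBCKernel {X Y1 Y2 : Type*} [Fintype Y1] [Fintype Y2] (N : X → Y1 → Y2 → ℝ) : Prop :=
  (∀ x y1 y2, 0 ≤ N x y1 y2) ∧ ∀ x, ∑ y1, ∑ y2, N x y1 y2 = 1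

/-- Tripartite non-signaling box: party `i` has input `a_i` and output `b_i`; for every
subset `T` of the parties, the marginal over the outputs of the parties not in `T`
depends only on the inputs of the parties in `T`. -/
def IsNSBox3 {A0 A1 A2 B0 B1 B2 : Type*} [Fintype B0] [Fintype B1] [Fintype B2]
    (Z : A0 → A1 → A2 → B0 → B1 → B2 → ℝ) : Prop :=
  (∀ a0 a1 a2 b0 b1 b2, 0 ≤ Z a0 a1 a2 b0 b1 b2) ∧
  (∀ a0 a1 a2, ∑ b0, ∑ b1, ∑ b2, Z a0 a1 a2 b0 b1 b2 = 1) ∧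
  (∀ a0 a0' a1 a2 b1 b2, ∑ b0, Z a0 a1 a2 b0 b1 b2 = ∑ b0, Z a0' a1 a2 b0 b1 b2) ∧
  (∀ a0 a1 a1' a2 b0 b2, ∑ b1, Z a0 a1 a2 b0 b1 b2 = ∑ b1, Z a0 a1' a2 b0 b1 b2) ∧
  (∀ a0 a1 a2 a2' b0 b1, ∑ b2, Z a0 a1 a2 b0 b1 b2 = ∑ b2, Z a0 a1 a2' b0 b1 b2) ∧
  (∀ a0 a0' a1 a1' a2 b2,
    ∑ b0, ∑ b1, Z a0 a1 a2 b0 b1 b2 = ∑ b0, ∑ b1, Z a0' a1' a2 b0 b1 b2) ∧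
  (∀ a0 a0' a1 a2 a2' b1,
    ∑ b0, ∑ b2, Z a0 a1 a2 b0 b1 b2 = ∑ b0, ∑ b2, Z a0' a1 a2' b0 b1 b2) ∧
  (∀ a0 a1 a1' a2 a2' b0,
    ∑ b1, ∑ b2, Z a0 a1 a2 b0 b1 b2 = ∑ b1, ∑ b2, Z a0 a1' a2' b0 b1 b2)

/-- The `n`-fold memoryless extension of the broadcast channel `N`. -/
def NProdBC {X Y1 Y2 : Type*} (n : ℕ) (N : X → Y1 → Y2 → ℝ) :
    (Fin n → X) → (Fin n → Y1) → (Fin n → Y2) → ℝ :=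
  fun x y1 y2 => ∏ i, N (x i) (y1 i) (y2 i)

/-- Joint success probability of a fully NS-assisted scheme
`Z(x, ŵ1, ŵ2 | (w1,w2), y1, y2)` over the broadcast channel `N`. -/
def etaBC {X Y1 Y2 : Type*} [Fintype X] [Fintype Y1] [Fintype Y2] (M1 M2 : ℕ)
    (N : X → Y1 → Y2 → ℝ)
    (Z : (Fin M1 × Fin M2) → Y1 → Y2 → X → Fin M1 → Fin M2 → ℝ) : ℝ :=
  ((M1 : ℝ) * (M2 : ℝ))⁻¹ * ∑ w1, ∑ w2, ∑ x, ∑ y1, ∑ y2,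
    N x y1 y2 * Z (w1, w2) y1 y2 x w1 w2

/-- NS-achievability of a rate pair over the broadcast channel `N` with full
(tripartite) NS assistance. -/
def NSAchBC {X Y1 Y2 : Type*} [Fintype X] [Fintype Y1] [Fintype Y2]
    (N : X → Y1 → Y2 → ℝ) (R : ℝ × ℝ) : Prop :=
  0 ≤ R.1 ∧ 0 ≤ R.2 ∧
  ∃ (M1 M2 : ℕ → ℕ)
    (Zn : ∀ n : ℕ, (Fin (M1 n) × Fin (M2 n)) → (Fin n → Y1) → (Fin n → Y2) →
      (Fin n → X) → Fin (M1 n) → Fin (M2 n) → ℝ),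
    (∀ n, IsNSBox3 (Zn n)) ∧
    Tendsto (fun n => etaBC (M1 n) (M2 n) (NProdBC n N) (Zn n)) atTop (nhds 1) ∧
    R.1 ≤ liminf (fun n => Real.logb 2 (M1 n) / (n : ℝ)) atTop ∧
    R.2 ≤ liminf (fun n => Real.logb 2 (M2 n) / (n : ℝ)) atTop

/-- The fully NS-assisted capacity region of the broadcast channel `N`. -/
def CNSBC {X Y1 Y2 : Type*} [Fintype X] [Fintype Y1] [Fintype Y2]
    (N : X → Y1 → Y2 → ℝ) : Set (ℝ × ℝ) :=
  closure {R : ℝ × ℝ | NSAchBC N R}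

/-- Mutual information `I(A;B)` (base 2) of a joint pmf `p(a,b)`. -/
def MI {A B : Type*} [Fintype A] [Fintype B] (p : A → B → ℝ) : ℝ :=
  ∑ a, ∑ b,
    if p a b = 0 then 0 else
      p a b * Real.logb 2 (p a b / ((∑ b', p a b') * (∑ a', p a' b)))

/-- Conditional mutual information `I(A;B|S)` (base 2) of a joint pmf `p(s,a,b)`. -/
def condMI {S A B : Type*} [Fintype S] [Fintype A] [Fintype B] (p : S → A → B → ℝ) : ℝ :=
  ∑ s, ∑ a, ∑ b,
    if p s a b = 0 then 0 else
      p s a b * Real.logb 2 (((∑ a', ∑ b', p s a' b') * p s a b) /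
        ((∑ b', p s a b') * (∑ a', p s a' b)))

/-- Shannon entropy (base 2) of a pmf `p`. -/
def H2 {A : Type*} [Fintype A] (p : A → ℝ) : ℝ :=
  -∑ a, if p a = 0 then 0 else p a * Real.logb 2 (p a)

/-- The Kramer–Shamai region `R_KS(N)`. -/
def RKS {X Y1 Y2 : Type*} [Fintype X] [Fintype Y1] [Fintype Y2]
    (N : X → Y1 → Y2 → ℝ) : Set (ℝ × ℝ) :=
  closure {R : ℝ × ℝ | 0 ≤ R.1 ∧ 0 ≤ R.2 ∧
    ∃ (m : ℕ) (q : X → Fin m → ℝ), IsPMF (fun p : X × Fin m => q p.1 p.2) ∧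
      R.1 ≤ MI (fun x y1 => (∑ u, q x u) * ∑ y2, N x y1 y2) ∧
      R.2 ≤ MI (fun (u : Fin m) y2 => ∑ x, ∑ y1, q x u * N x y1 y2) ∧
      R.1 + R.2 ≤ condMI (fun (u : Fin m) x y1 => ∑ y2, q x u * N x y1 y2)
        + MI (fun (u : Fin m) y2 => ∑ x, ∑ y1, q x u * N x y1 y2)}

/-- Sato's region `R_Sato(N)`. -/
def RSato {X Y1 Y2 : Type*} [Fintype X] [Fintype Y1] [Fintype Y2]
    (N : X → Y1 → Y2 → ℝ) : Set (ℝ × ℝ) :=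
  {R : ℝ × ℝ | 0 ≤ R.1 ∧ 0 ≤ R.2 ∧ ∃ p : X → ℝ, IsPMF p ∧
    R.1 ≤ MI (fun x y1 => p x * ∑ y2, N x y1 y2) ∧
    R.2 ≤ MI (fun x y2 => p x * ∑ y1, N x y1 y2) ∧
    ∀ N' : X → Y1 → Y2 → ℝ, IsBCKernel N' →
      (∀ x y1, ∑ y2, N' x y1 y2 = ∑ y2, N x y1 y2) →
      (∀ x y2, ∑ y1, N' x y1 y2 = ∑ y1, N x y1 y2) →
      R.1 + R.2 ≤ MI (fun x (y : Y1 × Y2) => p x * N' x y.1 y.2)}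

/-- Binary entropy function (base 2), with the `0·log₂ 0 = 0` convention. -/
def Hb (t : ℝ) : ℝ :=
  -(t * Real.logb 2 t) - (1 - t) * Real.logb 2 (1 - t)

/-- Individual success probability of user 1 for a fully NS-assisted scheme. -/
def eta1BC {X Y1 Y2 : Type*} [Fintype X] [Fintype Y1] [Fintype Y2] (M1 M2 : ℕ)
    (N : X → Y1 → Y2 → ℝ)
    (Z : (Fin M1 × Fin M2) → Y1 → Y2 → X → Fin M1 → Fin M2 → ℝ) : ℝ :=
  ((M1 : ℝ) * (M2 : ℝ))⁻¹ * ∑ w1, ∑ w2, ∑ wh2, ∑ x, ∑ y1, ∑ y2,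
    N x y1 y2 * Z (w1, w2) y1 y2 x w1 wh2


/-- Log-sum inequality (natural log, real-division conventions). -/
lemma my_logsum {ι : Type*} [Fintype ι] (a b : ι → ℝ)
    (ha : ∀ i, 0 ≤ a i) (hb : ∀ i, 0 ≤ b i) (hab : ∀ i, b i = 0 → a i = 0) :
    (∑ i, a i) * Real.log ((∑ i, a i) / (∑ i, b i)) ≤ ∑ i, a i * Real.log (a i / b i) := by
  set A := ∑ i, a i with hA
  set B := ∑ i, b i with hB
  rcases eq_or_lt_of_le (Finset.sum_nonneg (fun i _ => ha i) : (0:ℝ) ≤ A) with h0 | hApos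
  · have hz : ∀ i ∈ (Finset.univ : Finset ι), a i = 0 :=
      (Finset.sum_eq_zero_iff_of_nonneg (fun i _ => ha i)).1 h0.symm
    have hA0 : A = 0 := h0.symm
    have hR : ∑ i, a i * Real.log (a i / b i) = 0 :=
      Finset.sum_eq_zero (fun i hi => by rw [hz i hi]; ring)
    rw [hA0, hR]
    simp
  · have hBpos : 0 < B := by
      rcases eq_or_lt_of_le (Finset.sum_nonneg (fun i _ => hb i) : (0:ℝ) ≤ B) with h0 | h
      · exfalso
        have hz : ∀ i ∈ (Finset.univ : Finset ι), b i = 0 :=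
          (Finset.sum_eq_zero_iff_of_nonneg (fun i _ => hb i)).1 h0.symm
        have : A = 0 := Finset.sum_eq_zero (fun i hi => hab i (hz i hi))
        linarith
      · exact h
    set C := A / B with hC
    have hCpos : 0 < C := div_pos hApos hBpos
    have key : ∀ i, a i * Real.log C + (a i - C * b i) ≤ a i * Real.log (a i / b i) := by
      intro i
      rcases eq_or_lt_of_le (ha i) with h0 | hai
      · have : 0 ≤ C * b i := mul_nonneg hCpos.le (hb i)
        rw [← h0]
        simp only [zero_mul, zero_add, zero_sub]
        linarith
      · have hbi : 0 < b i := by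
          rcases eq_or_lt_of_le (hb i) with h0 | h
          · exact absurd (hab i h0.symm) (ne_of_gt hai)
          · exact h
        have hrpos : 0 < a i / b i := div_pos hai hbi
        have hx : 0 < (a i / b i) / C := div_pos hrpos hCpos
        have hlog : 1 - ((a i / b i) / C)⁻¹ ≤ Real.log ((a i / b i) / C) :=
          Real.one_sub_inv_le_log_of_pos hx
        have hsplit : Real.log ((a i / b i) / C) = Real.log (a i / b i) - Real.log C :=
          Real.log_div (ne_of_gt hrpos) (ne_of_gt hCpos)
        have hinv : ((a i / b i) / C)⁻¹ = C * b i / a i := by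
          field_simp
        rw [hsplit, hinv] at hlog
        have := mul_le_mul_of_nonneg_left hlog (ha i)
        have hcb : a i * (C * b i / a i) = C * b i := by
          field_simp
        rw [mul_sub, mul_one, hcb, mul_sub] at this
        linarith
    have hsum := Finset.sum_le_sum (fun i (_ : i ∈ Finset.univ) => key i)
    have hL : ∑ i, (a i * Real.log C + (a i - C * b i))
        = A * Real.log C + (A - C * B) := by
      rw [Finset.sum_add_distrib, ← Finset.sum_mul, Finset.sum_sub_distrib, ← Finset.mul_sum]
    have hCB : C * B = A := by rw [hC]; exact div_mul_cancel₀ A (ne_of_gt hBpos)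
    rw [hL, hCB] at hsum
    linarith

/-- Core one-shot Fano-type bound (natural log). -/
lemma my_core {ι : Type*} [Fintype ι] (p q lam : ι → ℝ)
    (hp : ∀ i, 0 ≤ p i) (hq : ∀ i, 0 ≤ q i)
    (hl0 : ∀ i, 0 ≤ lam i) (hl1 : ∀ i, lam i ≤ 1)
    (hsp : ∑ i, p i = 1) (hsq : ∑ i, q i = 1)
    (hac : ∀ i, q i = 0 → p i = 0) (M : ℝ) (hM : 1 ≤ M)
    (hbeta : ∑ i, lam i * q i ≤ 1 / M) :
    (∑ i, lam i * p i) * Real.log M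
      + (∑ i, lam i * p i) * Real.log (∑ i, lam i * p i)
      + (1 - ∑ i, lam i * p i) * Real.log (1 - ∑ i, lam i * p i)
      ≤ ∑ i, p i * Real.log (p i / q i) := by
  set α := ∑ i, lam i * p i with hα
  set β := ∑ i, lam i * q i with hβ
  have hα0 : 0 ≤ α := Finset.sum_nonneg (fun i _ => mul_nonneg (hl0 i) (hp i))
  have hα1 : α ≤ 1 := by
    rw [hα, ← hsp]
    exact Finset.sum_le_sum (fun i _ => by
      nlinarith [hl1 i, hp i, hl0 i])
  have hβ0 : 0 ≤ β := Finset.sum_nonneg (fun i _ => mul_nonneg (hl0 i) (hq i))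
  have hβ1 : β ≤ 1 := le_trans hbeta (by
    rw [div_le_one (lt_of_lt_of_le one_pos hM)]; exact hM)
  have hab1 : ∀ i, lam i * q i = 0 → lam i * p i = 0 := by
    intro i h
    rcases mul_eq_zero.1 h with h | h
    · rw [h, zero_mul]
    · rw [hac i h, mul_zero]
  have hab2 : ∀ i, (1 - lam i) * q i = 0 → (1 - lam i) * p i = 0 := by
    intro i h
    rcases mul_eq_zero.1 h with h | h
    · rw [h, zero_mul]
    · rw [hac i h, mul_zero]
  have hβα : β = 0 → α = 0 := by
    intro h
    have hz := (Finset.sum_eq_zero_iff_of_nonneg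
      (fun i _ => mul_nonneg (hl0 i) (hq i))).1 (hβ ▸ h)
    exact Finset.sum_eq_zero (fun i hi => hab1 i (hz i hi))
  -- two applications of log-sum
  have LS1 := my_logsum (fun i => lam i * p i) (fun i => lam i * q i)
    (fun i => mul_nonneg (hl0 i) (hp i)) (fun i => mul_nonneg (hl0 i) (hq i)) hab1
  have LS2 := my_logsum (fun i => (1 - lam i) * p i) (fun i => (1 - lam i) * q i)
    (fun i => mul_nonneg (by linarith [hl1 i]) (hp i))
    (fun i => mul_nonneg (by linarith [hl1 i]) (hq i)) hab2
  have hs1 : ∑ i, (1 - lam i) * p i = 1 - α := by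
    have h : ∑ i, (1 - lam i) * p i = (∑ i, p i) - ∑ i, lam i * p i := by
      rw [← Finset.sum_sub_distrib]
      exact Finset.sum_congr rfl (fun i _ => by ring)
    rw [h, hsp]
  have hs2 : ∑ i, (1 - lam i) * q i = 1 - β := by
    have h : ∑ i, (1 - lam i) * q i = (∑ i, q i) - ∑ i, lam i * q i := by
      rw [← Finset.sum_sub_distrib]
      exact Finset.sum_congr rfl (fun i _ => by ring)
    rw [h, hsq]
  rw [hs1, hs2] at LS2
  -- simplify logs in the RHS of LS1 and LS2
  have hcan1 : ∀ i, lam i * p i * Real.log (lam i * p i / (lam i * q i))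
      = lam i * (p i * Real.log (p i / q i)) := by
    intro i
    rcases eq_or_lt_of_le (hl0 i) with h0 | h
    · rw [← h0]; ring
    · rw [mul_div_mul_left _ _ (ne_of_gt h)]; ring
  have hcan2 : ∀ i, (1 - lam i) * p i * Real.log ((1 - lam i) * p i / ((1 - lam i) * q i))
      = (1 - lam i) * (p i * Real.log (p i / q i)) := by
    intro i
    rcases eq_or_lt_of_le (sub_nonneg.2 (hl1 i)) with h0 | h
    · rw [← h0]; ring
    · rw [mul_div_mul_left _ _ (ne_of_gt h)]; ring
  rw [Finset.sum_congr rfl (fun i _ => hcan1 i)] at LS1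
  rw [Finset.sum_congr rfl (fun i _ => hcan2 i)] at LS2
  have hsplit : ∑ i, p i * Real.log (p i / q i)
      = (∑ i, lam i * (p i * Real.log (p i / q i)))
        + ∑ i, (1 - lam i) * (p i * Real.log (p i / q i)) := by
    rw [← Finset.sum_add_distrib]
    exact Finset.sum_congr rfl (fun i _ => by ring)
  -- now the scalar inequality
  have T1 : α * Real.log M + α * Real.log α ≤ α * Real.log (α / β) := by
    rcases eq_or_lt_of_le hα0 with h0 | hαpos
    · rw [← h0]; simp
    · have hβpos : 0 < β := by
        rcases eq_or_lt_of_le hβ0 with h0 | h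
        · exact absurd (hβα h0.symm) (ne_of_gt hαpos)
        · exact h
      have hld : Real.log (α / β) = Real.log α - Real.log β :=
        Real.log_div (ne_of_gt hαpos) (ne_of_gt hβpos)
      have hlb : Real.log β ≤ Real.log (1 / M) := Real.log_le_log hβpos hbeta
      rw [Real.log_div one_ne_zero (by positivity), Real.log_one] at hlb
      rw [hld]
      nlinarith [hαpos]
  have T2 : (1 - α) * Real.log (1 - α) ≤ (1 - α) * Real.log ((1 - α) / (1 - β)) := by
    rcases eq_or_lt_of_le hα1 with h1 | hαlt
    · rw [h1]; simp
    · have h1α : 0 < 1 - α := by linarith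
      rcases eq_or_lt_of_le hβ1 with hb1 | hβlt
      · rw [hb1]
        simp only [sub_self, div_zero, Real.log_zero, mul_zero]
        have : Real.log (1 - α) ≤ 0 := Real.log_nonpos (by linarith) (by linarith)
        nlinarith
      · have h1β : 0 < 1 - β := by linarith
        have hld : Real.log ((1 - α) / (1 - β)) = Real.log (1 - α) - Real.log (1 - β) :=
          Real.log_div (ne_of_gt h1α) (ne_of_gt h1β)
        have : Real.log (1 - β) ≤ 0 := Real.log_nonpos (by linarith) (by linarith)
        rw [hld]
        nlinarith
  rw [hsplit]
  calc α * Real.log M + α * Real.log α + (1 - α) * Real.log (1 - α)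
      ≤ α * Real.log (α / β) + (1 - α) * Real.log ((1 - α) / (1 - β)) := by linarith
    _ ≤ _ := add_le_add LS1 LS2

/-- Triple-sum version of the core bound. -/
lemma my_core3 {A B C : Type*} [Fintype A] [Fintype B] [Fintype C]
    (p q lam : A → B → C → ℝ)
    (hp : ∀ a b c, 0 ≤ p a b c) (hq : ∀ a b c, 0 ≤ q a b c)
    (hl0 : ∀ a b c, 0 ≤ lam a b c) (hl1 : ∀ a b c, lam a b c ≤ 1)
    (hsp : ∑ a, ∑ b, ∑ c, p a b c = 1) (hsq : ∑ a, ∑ b, ∑ c, q a b c = 1)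
    (hac : ∀ a b c, q a b c = 0 → p a b c = 0) (M : ℝ) (hM : 1 ≤ M)
    (hbeta : ∑ a, ∑ b, ∑ c, lam a b c * q a b c ≤ 1 / M) :
    (∑ a, ∑ b, ∑ c, lam a b c * p a b c) * Real.log M
      + (∑ a, ∑ b, ∑ c, lam a b c * p a b c) *
          Real.log (∑ a, ∑ b, ∑ c, lam a b c * p a b c)
      + (1 - ∑ a, ∑ b, ∑ c, lam a b c * p a b c) *
          Real.log (1 - ∑ a, ∑ b, ∑ c, lam a b c * p a b c)
      ≤ ∑ a, ∑ b, ∑ c, p a b c * Real.log (p a b c / q a b c) := by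
  have tri : ∀ f : A → B → C → ℝ,
      ∑ i : A × B × C, f i.1 i.2.1 i.2.2 = ∑ a, ∑ b, ∑ c, f a b c := by
    intro f
    rw [Fintype.sum_prod_type]
    exact Finset.sum_congr rfl fun a _ => by rw [Fintype.sum_prod_type]
  have h := my_core (fun i : A × B × C => p i.1 i.2.1 i.2.2)
    (fun i => q i.1 i.2.1 i.2.2) (fun i => lam i.1 i.2.1 i.2.2)
    (fun i => hp _ _ _) (fun i => hq _ _ _) (fun i => hl0 _ _ _) (fun i => hl1 _ _ _)
    ((tri p).trans hsp) ((tri q).trans hsq) (fun i => hac _ _ _) M hM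
    (le_of_eq_of_le (tri fun a b c => lam a b c * q a b c) hbeta)
  have e1 : ∑ a, ∑ b, ∑ c, lam a b c * p a b c
      = ∑ i : A × B × C, lam i.1 i.2.1 i.2.2 * p i.1 i.2.1 i.2.2 :=
    (tri fun a b c => lam a b c * p a b c).symm
  have e2 : ∑ a, ∑ b, ∑ c, p a b c * Real.log (p a b c / q a b c)
      = ∑ i : A × B × C, p i.1 i.2.1 i.2.2 *
          Real.log (p i.1 i.2.1 i.2.2 / q i.1 i.2.1 i.2.2) :=
    (tri fun a b c => p a b c * Real.log (p a b c / q a b c)).symm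
  rw [e1, e2]
  exact h

/-- NS Fano inequality for broadcast channels: for any fully
NS-assisted scheme `Z`, the induced joint distribution
`p(w2,x,y1) = (1/(M1·M2)) Σ_{w1,y2} Z_T(x|w1,w2)·N(y1,y2|x)` satisfies
`I(X;Y1|W2) ≥ η₁(Z)·log₂ M1 − H_b(η₁(Z))`, where `Z_T` is the transmitter marginal. -/
theorem stmt10 {X Y1 Y2 : Type*} [Fintype X] [Fintype Y1] [Fintype Y2]
    (N : X → Y1 → Y2 → ℝ) (hN : IsBCKernel N) (M1 M2 : ℕ)
    (Z : (Fin M1 × Fin M2) → Y1 → Y2 → X → Fin M1 → Fin M2 → ℝ) (hZ : IsNSBox3 Z)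
    (ZT : Fin M1 → Fin M2 → X → ℝ)
    (hZT : ∀ w1 w2 y1 y2 x, ZT w1 w2 x = ∑ wh1, ∑ wh2, Z (w1, w2) y1 y2 x wh1 wh2) :
    eta1BC M1 M2 N Z * Real.logb 2 M1 - Hb (eta1BC M1 M2 N Z)
      ≤ condMI (fun (w2 : Fin M2) x y1 =>
          ((M1 : ℝ) * (M2 : ℝ))⁻¹ * ∑ w1, ∑ y2, ZT w1 w2 x * N x y1 y2) := by
  classical
  obtain ⟨hNnn, hNsum⟩ := hN
  obtain ⟨hZnn, hZnorm, hNS3, hNS4, hNS5, hNS6, hNS7, hNS8⟩ := hZ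
  have hHb0 : Hb 0 = 0 := by simp [Hb]
  by_cases hM1 : M1 = 0
  · subst hM1
    have he : eta1BC 0 M2 N Z = 0 := by simp [eta1BC]
    rw [he, hHb0]
    have hc : condMI (fun (w2 : Fin M2) x y1 =>
        ((0 : ℝ) * (M2 : ℝ))⁻¹ * ∑ w1 : Fin 0, ∑ y2, ZT w1 w2 x * N x y1 y2) = 0 := by
      simp [condMI]
    rw [show ((0:ℕ):ℝ) = (0:ℝ) by norm_num] at *
    simp [condMI]
  by_cases hM2 : M2 = 0
  · subst hM2
    have he : eta1BC M1 0 N Z = 0 := by simp [eta1BC]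
    rw [he, hHb0]
    simp [condMI]
  by_cases hX : IsEmpty X
  · have he : eta1BC M1 M2 N Z = 0 := by simp [eta1BC]
    rw [he, hHb0]
    simp [condMI]
  haveI hXne : Nonempty X := not_isEmpty_iff.mp hX
  -- Y1, Y2 are nonempty
  haveI hY1ne : Nonempty Y1 := by
    by_contra h
    haveI : IsEmpty Y1 := not_nonempty_iff.mp h
    have := hNsum (Classical.arbitrary X)
    simp at this
  haveI hY2ne : Nonempty Y2 := by
    by_contra h
    haveI : IsEmpty Y2 := not_nonempty_iff.mp h
    have := hNsum (Classical.arbitrary X)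
    simp at this
  have hM1pos : 0 < M1 := Nat.pos_of_ne_zero hM1
  have hM2pos : 0 < M2 := Nat.pos_of_ne_zero hM2
  have hM1R : (0:ℝ) < (M1:ℝ) := by exact_mod_cast hM1pos
  have hM2R : (0:ℝ) < (M2:ℝ) := by exact_mod_cast hM2pos
  set y20 : Y2 := Classical.arbitrary Y2 with hy20
  set w0 : Fin M1 × Fin M2 := ⟨⟨0, hM1pos⟩, ⟨0, hM2pos⟩⟩ with hw0
  set c : ℝ := ((M1 : ℝ) * (M2 : ℝ))⁻¹ with hcdef
  have hcpos : 0 < c := by rw [hcdef]; positivity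
  -- basic objects
  set N1 : X → Y1 → ℝ := fun x y1 => ∑ y2, N x y1 y2 with hN1def
  set S : Fin M2 → X → ℝ := fun w2 x => ∑ w1, ZT w1 w2 x with hSdef
  set P : Fin M2 → X → Y1 → ℝ :=
    fun w2 x y1 => c * ∑ w1, ∑ y2, ZT w1 w2 x * N x y1 y2 with hPdef
  set G : Fin M1 → Fin M2 → Y1 → X → Fin M1 → ℝ :=
    fun w1 w2 y1 x wh1 => ∑ wh2, Z (w1, w2) y1 y20 x wh1 wh2 with hGdef
  set D : Y1 → Fin M1 → ℝ := fun y1 wh1 => ∑ x, G w0.1 w0.2 y1 x wh1 with hDdef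
  set s : Fin M2 → X → Y1 → ℝ :=
    fun w2 x y1 => c * ∑ w1, N1 x y1 * G w1 w2 y1 x w1 with hsdef
  set py : Fin M2 → Y1 → ℝ := fun w2 y1 => ∑ x, P w2 x y1 with hpydef
  set q : Fin M2 → X → Y1 → ℝ :=
    fun w2 x y1 => (M2 : ℝ) * (c * S w2 x) * py w2 y1 with hqdef
  set lam : Fin M2 → X → Y1 → ℝ :=
    fun w2 x y1 => if P w2 x y1 = 0 then 0 else s w2 x y1 / P w2 x y1 with hlamdef
  -- elementary facts
  have hZTnn : ∀ w1 w2 x, 0 ≤ ZT w1 w2 x := by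
    intro w1 w2 x
    rw [hZT w1 w2 (Classical.arbitrary Y1) y20 x]
    exact Finset.sum_nonneg fun _ _ => Finset.sum_nonneg fun _ _ => hZnn _ _ _ _ _ _
  have hZTsum : ∀ w1 w2, ∑ x, ZT w1 w2 x = 1 := by
    intro w1 w2
    rw [Finset.sum_congr rfl
      (fun x _ => hZT w1 w2 (Classical.arbitrary Y1) y20 x)]
    exact hZnorm (w1, w2) (Classical.arbitrary Y1) y20
  have hN1nn : ∀ x y1, 0 ≤ N1 x y1 :=
    fun x y1 => Finset.sum_nonneg fun y2 _ => hNnn x y1 y2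
  have hGnn : ∀ w1 w2 y1 x wh1, 0 ≤ G w1 w2 y1 x wh1 :=
    fun w1 w2 y1 x wh1 => Finset.sum_nonneg fun _ _ => hZnn _ _ _ _ _ _
  have hSnn : ∀ w2 x, 0 ≤ S w2 x :=
    fun w2 x => Finset.sum_nonneg fun w1 _ => hZTnn w1 w2 x
  have hSsum : ∀ w2, ∑ x, S w2 x = (M1 : ℝ) := by
    intro w2
    rw [hSdef]
    rw [Finset.sum_comm]
    simp [hZTsum _ w2]
  -- factorization of P
  have hPfac : ∀ w2 x y1, P w2 x y1 = c * (S w2 x * N1 x y1) := by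
    intro w2 x y1
    show c * (∑ w1, ∑ y2, ZT w1 w2 x * N x y1 y2)
        = c * ((∑ w1, ZT w1 w2 x) * ∑ y2, N x y1 y2)
    rw [Finset.sum_mul]
    congr 1
    exact Finset.sum_congr rfl fun w1 _ => (Finset.mul_sum _ _ _).symm
  have hPnn : ∀ w2 x y1, 0 ≤ P w2 x y1 := by
    intro w2 x y1
    rw [hPfac]
    exact mul_nonneg hcpos.le (mul_nonneg (hSnn w2 x) (hN1nn x y1))
  have hN1sum : ∀ x, ∑ y1, N1 x y1 = 1 := hNsum
  have hpx : ∀ w2 x, ∑ y1, P w2 x y1 = c * S w2 x := by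
    intro w2 x
    rw [Finset.sum_congr rfl fun y1 _ => hPfac w2 x y1]
    have h : ∑ y1, c * (S w2 x * N1 x y1) = c * (S w2 x * ∑ y1, N1 x y1) := by
      rw [Finset.mul_sum, Finset.mul_sum]
    rw [h, hN1sum x, mul_one]
  have hPtot : ∀ w2, ∑ x, ∑ y1, P w2 x y1 = (M2 : ℝ)⁻¹ := by
    intro w2
    rw [Finset.sum_congr rfl fun x _ => hpx w2 x, ← Finset.mul_sum, hSsum w2, hcdef]
    field_simp
  have hpytot : ∀ w2, ∑ y1, py w2 y1 = (M2 : ℝ)⁻¹ := by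
    intro w2
    show ∑ y1, ∑ x, P w2 x y1 = _
    rw [Finset.sum_comm]
    exact hPtot w2
  have hpynn : ∀ w2 y1, 0 ≤ py w2 y1 :=
    fun w2 y1 => Finset.sum_nonneg fun x _ => hPnn w2 x y1
  -- NS facts
  have hG5 : ∀ w1 w2 y1 y2 x wh1,
      ∑ wh2, Z (w1, w2) y1 y2 x wh1 wh2 = G w1 w2 y1 x wh1 :=
    fun w1 w2 y1 y2 x wh1 => hNS5 (w1, w2) y1 y2 y20 x wh1
  have hD7 : ∀ w1 w2 y1 wh1, ∑ x, G w1 w2 y1 x wh1 = D y1 wh1 := by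
    intro w1 w2 y1 wh1
    show ∑ x, ∑ wh2, Z (w1, w2) y1 y20 x wh1 wh2
        = ∑ x, ∑ wh2, Z (w0.1, w0.2) y1 y20 x wh1 wh2
    exact hNS7 (w1, w2) (w0.1, w0.2) y1 y20 y20 wh1
  have hDsum : ∀ y1, ∑ wh1, D y1 wh1 = 1 := by
    intro y1
    show ∑ wh1, ∑ x, ∑ wh2, Z (w0.1, w0.2) y1 y20 x wh1 wh2 = 1
    rw [Finset.sum_comm]
    exact hZnorm (w0.1, w0.2) y1 y20
  -- success mass
  have hGle : ∀ w1 w2 y1 x wh1, G w1 w2 y1 x wh1 ≤ ZT w1 w2 x := by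
    intro w1 w2 y1 x wh1
    rw [hZT w1 w2 y1 y20 x]
    exact Finset.single_le_sum
      (f := fun wh1' => ∑ wh2, Z (w1, w2) y1 y20 x wh1' wh2)
      (fun i _ => Finset.sum_nonneg fun _ _ => hZnn _ _ _ _ _ _) (Finset.mem_univ wh1)
  have hsnn : ∀ w2 x y1, 0 ≤ s w2 x y1 := by
    intro w2 x y1
    rw [hsdef]
    exact mul_nonneg hcpos.le (Finset.sum_nonneg fun w1 _ =>
      mul_nonneg (hN1nn x y1) (hGnn w1 w2 y1 x w1))
  have hsP : ∀ w2 x y1, s w2 x y1 ≤ P w2 x y1 := by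
    intro w2 x y1
    rw [hPfac w2 x y1]
    show c * ∑ w1, N1 x y1 * G w1 w2 y1 x w1 ≤ _
    have h : S w2 x * N1 x y1 = ∑ w1, N1 x y1 * ZT w1 w2 x := by
      show (∑ w1, ZT w1 w2 x) * N1 x y1 = _
      rw [Finset.sum_mul]
      exact Finset.sum_congr rfl fun w1 _ => mul_comm _ _
    rw [h]
    refine mul_le_mul_of_nonneg_left (Finset.sum_le_sum fun w1 _ => ?_) hcpos.le
    exact mul_le_mul_of_nonneg_left (hGle w1 w2 y1 x w1) (hN1nn x y1)
  have hkey : ∀ w1 w2, ∑ wh2, ∑ x, ∑ y1, ∑ y2,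
      N x y1 y2 * Z (w1, w2) y1 y2 x w1 wh2
      = ∑ x, ∑ y1, N1 x y1 * G w1 w2 y1 x w1 := by
    intro w1 w2
    rw [Finset.sum_comm]
    refine Finset.sum_congr rfl fun x _ => ?_
    rw [Finset.sum_comm]
    refine Finset.sum_congr rfl fun y1 _ => ?_
    rw [Finset.sum_comm]
    calc ∑ y2, ∑ wh2, N x y1 y2 * Z (w1, w2) y1 y2 x w1 wh2
        = ∑ y2, N x y1 y2 * G w1 w2 y1 x w1 := Finset.sum_congr rfl fun y2 _ => by
          rw [← Finset.mul_sum, hG5 w1 w2 y1 y2 x w1]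
      _ = N1 x y1 * G w1 w2 y1 x w1 := by rw [← Finset.sum_mul]
  have hseta : ∑ w2, ∑ x, ∑ y1, s w2 x y1 = eta1BC M1 M2 N Z := by
    have e1 : eta1BC M1 M2 N Z
        = c * ∑ w1, ∑ w2, ∑ x, ∑ y1, N1 x y1 * G w1 w2 y1 x w1 := by
      show ((M1 : ℝ) * (M2 : ℝ))⁻¹ * ∑ w1, ∑ w2, ∑ wh2, ∑ x, ∑ y1, ∑ y2,
          N x y1 y2 * Z (w1, w2) y1 y2 x w1 wh2 = _
      rw [← hcdef]
      congr 1
      exact Finset.sum_congr rfl fun w1 _ => Finset.sum_congr rfl fun w2 _ => hkey w1 w2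
    rw [e1]
    have e2 : ∑ w2, ∑ x, ∑ y1, s w2 x y1
        = c * ∑ w2, ∑ x, ∑ y1, ∑ w1, N1 x y1 * G w1 w2 y1 x w1 := by
      show ∑ w2, ∑ x, ∑ y1, c * ∑ w1, N1 x y1 * G w1 w2 y1 x w1 = _
      simp only [← Finset.mul_sum]
    rw [e2]
    congr 1
    calc ∑ w2, ∑ x, ∑ y1, ∑ w1, N1 x y1 * G w1 w2 y1 x w1
        = ∑ w2, ∑ x, ∑ w1, ∑ y1, N1 x y1 * G w1 w2 y1 x w1 :=
          Finset.sum_congr rfl fun w2 _ => Finset.sum_congr rfl fun x _ =>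
            Finset.sum_comm
      _ = ∑ w2, ∑ w1, ∑ x, ∑ y1, N1 x y1 * G w1 w2 y1 x w1 :=
          Finset.sum_congr rfl fun w2 _ => Finset.sum_comm
      _ = ∑ w1, ∑ w2, ∑ x, ∑ y1, N1 x y1 * G w1 w2 y1 x w1 :=
          Finset.sum_comm
  -- lam facts
  have hlam0 : ∀ w2 x y1, 0 ≤ lam w2 x y1 := by
    intro w2 x y1
    rw [hlamdef]
    dsimp only
    split
    · exact le_refl 0
    · exact div_nonneg (hsnn w2 x y1) (hPnn w2 x y1)
  have hlam1 : ∀ w2 x y1, lam w2 x y1 ≤ 1 := by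
    intro w2 x y1
    rw [hlamdef]
    dsimp only
    split
    · exact zero_le_one
    · next hP =>
      have hPpos : 0 < P w2 x y1 := lt_of_le_of_ne (hPnn w2 x y1) (Ne.symm hP)
      exact (div_le_one hPpos).2 (hsP w2 x y1)
  have hlamP : ∀ w2 x y1, lam w2 x y1 * P w2 x y1 = s w2 x y1 := by
    intro w2 x y1
    rw [hlamdef]
    dsimp only
    split
    · next hP =>
      rw [zero_mul]
      exact (le_antisymm (hP ▸ hsP w2 x y1) (hsnn w2 x y1)).symm
    · next hP => exact div_mul_cancel₀ _ hP
  -- q facts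
  have hqnn : ∀ w2 x y1, 0 ≤ q w2 x y1 := by
    intro w2 x y1
    rw [hqdef]
    exact mul_nonneg (mul_nonneg hM2R.le (mul_nonneg hcpos.le (hSnn w2 x))) (hpynn w2 y1)
  have hqtot : ∑ w2, ∑ x, ∑ y1, q w2 x y1 = 1 := by
    have h1 : ∀ w2 x, ∑ y1, q w2 x y1 = (M2 : ℝ) * (c * S w2 x) * (M2 : ℝ)⁻¹ := by
      intro w2 x
      show ∑ y1, (M2 : ℝ) * (c * S w2 x) * py w2 y1 = _
      rw [← Finset.mul_sum, hpytot w2]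
    have h2 : ∀ w2, ∑ x, ∑ y1, q w2 x y1 = (M2 : ℝ)⁻¹ := by
      intro w2
      rw [Finset.sum_congr rfl fun x _ => h1 w2 x,
        Finset.sum_congr rfl fun x _ => (by ring :
          (M2 : ℝ) * (c * S w2 x) * (M2 : ℝ)⁻¹ = ((M2 : ℝ) * c * (M2 : ℝ)⁻¹) * S w2 x),
        ← Finset.mul_sum, hSsum w2, hcdef]
      field_simp
    rw [Finset.sum_congr rfl fun w2 _ => h2 w2, Finset.sum_const, Finset.card_univ,
      Fintype.card_fin, nsmul_eq_mul, mul_inv_cancel₀ (ne_of_gt hM2R)]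
  have hqac : ∀ w2 x y1, q w2 x y1 = 0 → P w2 x y1 = 0 := by
    intro w2 x y1 h
    by_contra hP
    have hPpos : 0 < P w2 x y1 := lt_of_le_of_ne (hPnn w2 x y1) (Ne.symm hP)
    have hSN : S w2 x * N1 x y1 ≠ 0 := by
      intro hz
      rw [hPfac w2 x y1, hz, mul_zero] at hP
      exact hP rfl
    have hSpos : 0 < S w2 x := by
      rcases (hSnn w2 x).lt_or_eq with h' | h'
      · exact h'
      · exact absurd (by rw [← h', zero_mul]) hSN
    have hpypos : 0 < py w2 y1 :=
      lt_of_lt_of_le hPpos (Finset.single_le_sum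
        (f := fun x' => P w2 x' y1) (fun i _ => hPnn w2 i y1) (Finset.mem_univ x))
    have : 0 < q w2 x y1 :=
      mul_pos (mul_pos hM2R (mul_pos hcpos hSpos)) hpypos
    rw [h] at this
    exact lt_irrefl 0 this
  -- beta bound
  have hsp1 : ∑ w2, ∑ x, ∑ y1, P w2 x y1 = 1 := by
    rw [Finset.sum_congr rfl fun w2 _ => hPtot w2, Finset.sum_const, Finset.card_univ,
      Fintype.card_fin, nsmul_eq_mul, mul_inv_cancel₀ (ne_of_gt hM2R)]
  have hM1le : (1 : ℝ) ≤ (M1 : ℝ) := by exact_mod_cast hM1pos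
  have hbeta : ∑ w2, ∑ x, ∑ y1, lam w2 x y1 * q w2 x y1 ≤ 1 / (M1 : ℝ) := by
    have ht : ∀ w2 x y1, lam w2 x y1 * q w2 x y1
        ≤ (M2 : ℝ) * c * py w2 y1 * ∑ w1, G w1 w2 y1 x w1 := by
      intro w2 x y1
      have hRHSnn : 0 ≤ (M2 : ℝ) * c * py w2 y1 * ∑ w1, G w1 w2 y1 x w1 :=
        mul_nonneg (mul_nonneg (mul_nonneg hM2R.le hcpos.le) (hpynn w2 y1))
          (Finset.sum_nonneg fun w1 _ => hGnn w1 w2 y1 x w1)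
      rw [hlamdef]
      dsimp only
      split
      · rw [zero_mul]; exact hRHSnn
      · next hP =>
        have hSN : S w2 x * N1 x y1 ≠ 0 := by
          intro hz
          rw [hPfac w2 x y1, hz, mul_zero] at hP
          exact hP rfl
        have hS0 : S w2 x ≠ 0 := fun hz => hSN (by rw [hz]; ring)
        have hN10 : N1 x y1 ≠ 0 := fun hz => hSN (by rw [hz]; ring)
        have hs' : s w2 x y1 = c * (N1 x y1 * ∑ w1, G w1 w2 y1 x w1) := by
          show c * ∑ w1, N1 x y1 * G w1 w2 y1 x w1 = _
          congr 1
          rw [Finset.mul_sum]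
        have hq' : q w2 x y1 = (M2 : ℝ) * (c * S w2 x) * py w2 y1 := rfl
        apply le_of_eq
        rw [hs', hq', hPfac w2 x y1]
        field_simp
    calc ∑ w2, ∑ x, ∑ y1, lam w2 x y1 * q w2 x y1
        ≤ ∑ w2, ∑ x, ∑ y1, (M2 : ℝ) * c * py w2 y1 * ∑ w1, G w1 w2 y1 x w1 :=
          Finset.sum_le_sum fun w2 _ => Finset.sum_le_sum fun x _ =>
            Finset.sum_le_sum fun y1 _ => ht w2 x y1
      _ = ∑ w2, ∑ y1, ∑ x, (M2 : ℝ) * c * py w2 y1 * ∑ w1, G w1 w2 y1 x w1 :=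
          Finset.sum_congr rfl fun w2 _ => Finset.sum_comm
      _ = ∑ w2, ∑ y1, (M2 : ℝ) * c * py w2 y1 :=
          Finset.sum_congr rfl fun w2 _ => Finset.sum_congr rfl fun y1 _ => by
            rw [← Finset.mul_sum]
            have h3 : ∑ x, ∑ w1, G w1 w2 y1 x w1 = 1 := by
              rw [Finset.sum_comm]
              rw [Finset.sum_congr rfl fun w1 _ => hD7 w1 w2 y1 w1]
              exact hDsum y1
            rw [h3, mul_one]
      _ = ∑ w2 : Fin M2, (M2 : ℝ) * c * (M2 : ℝ)⁻¹ :=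
          Finset.sum_congr rfl fun w2 _ => by rw [← Finset.mul_sum, hpytot w2]
      _ = 1 / (M1 : ℝ) := by
          rw [Finset.sum_const, Finset.card_univ, Fintype.card_fin, nsmul_eq_mul, hcdef]
          field_simp
  -- apply the core bound
  have main := my_core3 P q lam hPnn hqnn hlam0 hlam1 hsp1 hqtot hqac (M1 : ℝ) hM1le hbeta
  have heta : ∑ w2, ∑ x, ∑ y1, lam w2 x y1 * P w2 x y1 = eta1BC M1 M2 N Z := by
    rw [Finset.sum_congr rfl fun w2 _ => Finset.sum_congr rfl fun x _ =>
      Finset.sum_congr rfl fun y1 _ => hlamP w2 x y1]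
    exact hseta
  rw [heta] at main
  -- rewrite condMI
  have hlog2 : (0 : ℝ) < Real.log 2 := Real.log_pos one_lt_two
  have hterm : ∀ w2 x y1,
      (if P w2 x y1 = 0 then 0 else P w2 x y1 * Real.logb 2
        ((∑ x', ∑ y1', P w2 x' y1') * P w2 x y1 /
          ((∑ y1', P w2 x y1') * (∑ x', P w2 x' y1))))
      = P w2 x y1 * Real.log (P w2 x y1 / q w2 x y1) / Real.log 2 := by
    intro w2 x y1
    by_cases hP : P w2 x y1 = 0
    · rw [if_pos hP, hP]
      simp
    · rw [if_neg hP]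
      have hratio : (∑ x', ∑ y1', P w2 x' y1') * P w2 x y1 /
          ((∑ y1', P w2 x y1') * (∑ x', P w2 x' y1))
          = P w2 x y1 / q w2 x y1 := by
        rw [hPtot w2, hpx w2 x]
        show (M2 : ℝ)⁻¹ * P w2 x y1 / (c * S w2 x * py w2 y1)
            = P w2 x y1 / ((M2 : ℝ) * (c * S w2 x) * py w2 y1)
        ring
      rw [hratio, Real.logb]
      ring
  have hcond : condMI P
      = (∑ w2, ∑ x, ∑ y1, P w2 x y1 * Real.log (P w2 x y1 / q w2 x y1)) / Real.log 2 := by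
    simp only [condMI]
    rw [Finset.sum_congr rfl fun w2 _ => Finset.sum_congr rfl fun x _ =>
      Finset.sum_congr rfl fun y1 _ => hterm w2 x y1]
    simp only [← Finset.sum_div]
  rw [hcond, le_div_iff₀ hlog2]
  have hE : (eta1BC M1 M2 N Z * Real.logb 2 (M1 : ℝ) - Hb (eta1BC M1 M2 N Z)) * Real.log 2
      = eta1BC M1 M2 N Z * Real.log (M1 : ℝ)
        + eta1BC M1 M2 N Z * Real.log (eta1BC M1 M2 N Z)
        + (1 - eta1BC M1 M2 N Z) * Real.log (1 - eta1BC M1 M2 N Z) := by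
    simp only [Hb, Real.logb]
    field_simp
    ring
  rw [hE]
  exact main
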